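/- Let B₁ be an F_q-subspace of F_{q^m} of dimension β₁, and let b be uniformly random in F_{q^m}. The probability that b ∈ B₁ + b^{-1}B₁ (with the convention b^{-1} = 0 if b = 0) is at most 2q^{2β₁}/q^m. -/
import Mathlib
open Module Submodule Polynomial

theorem root_bound (L : Type) [Field L] [Fintype L] [DecidableEq L] (c d : L) :
    (Finset.univ.filter (fun b : L => b^2 = c*b + d)).card ≤ 2 := by
  classical
  set p : L[X] := X^2 - (C c * X + C d) with hp
  have hmon : p.Monic := by
    apply Polynomial.monic_X_pow_sub
    apply lt_of_le_of_lt (Polynomial.degree_add_le _ _)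
    simp only [max_lt_iff]
    constructor
    · exact lt_of_le_of_lt (Polynomial.degree_C_mul_X_le c) (by norm_num)
    · exact lt_of_le_of_lt (Polynomial.degree_C_le) (by norm_num)
  have hne : p ≠ 0 := hmon.ne_zero
  have hsub : (Finset.univ.filter (fun b : L => b^2 = c*b + d)) ⊆ p.roots.toFinset := by
    intro b hb
    simp only [Finset.mem_filter] at hb
    rw [Multiset.mem_toFinset, mem_roots hne]
    simp [hp, IsRoot, hb.2]
  calc _ ≤ p.roots.toFinset.card := Finset.card_le_card hsub
    _ ≤ Multiset.card p.roots := Multiset.toFinset_card_le _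
    _ ≤ p.natDegree := p.card_roots'
    _ ≤ 2 := by
        have : p.natDegree = 2 := by rw [hp]; compute_degree!
        omega

theorem stmt_4 (q m β₁ : ℕ) (hq : 2 ≤ q)
    (K L : Type) [Field K] [Field L] [Algebra K L] [Fintype K] [Fintype L]
    (hcard : Fintype.card K = q) (hm : Module.finrank K L = m)
    (B₁ : Submodule K L) (hB₁ : Module.finrank K ↥B₁ = β₁) :
    (Nat.card {b : L //
        b ∈ B₁ ⊔ Submodule.map (LinearMap.mulLeft K b⁻¹) B₁} : ℝ)
      / (Nat.card L : ℝ) ≤ 2 * (q : ℝ) ^ (2 * β₁) / (q : ℝ) ^ m := by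
  classical
  haveI : Fintype ↥B₁ := Fintype.ofFinite _
  set S : Finset L :=
    Finset.univ.filter (fun b : L => b ∈ B₁ ⊔ Submodule.map (LinearMap.mulLeft K b⁻¹) B₁) with hS
  have hcardS : Nat.card {b : L //
      b ∈ B₁ ⊔ Submodule.map (LinearMap.mulLeft K b⁻¹) B₁} = S.card := by
    rw [Nat.card_eq_fintype_card, Fintype.card_subtype]
  have hcover : S ⊆ (Finset.univ : Finset (↥B₁ × ↥B₁)).biUnion
      (fun p => Finset.univ.filter fun b : L => b^2 = (p.1 : L)*b + (p.2 : L)) := by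
    intro b hb
    simp only [hS, Finset.mem_filter, Finset.mem_univ, true_and] at hb
    rw [Submodule.mem_sup] at hb
    obtain ⟨y, hy, z, hz, hyz⟩ := hb
    obtain ⟨w, hw, hwz⟩ := Submodule.mem_map.mp hz
    simp only [LinearMap.mulLeft_apply] at hwz
    rw [← hwz] at hyz
    rw [Finset.mem_biUnion]
    by_cases hb0 : b = 0
    · exact ⟨⟨⟨0, B₁.zero_mem⟩, ⟨0, B₁.zero_mem⟩⟩, Finset.mem_univ _, by simp [hb0]⟩
    · refine ⟨⟨⟨y, hy⟩, ⟨w, hw⟩⟩, Finset.mem_univ _, ?_⟩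
      simp only [Finset.mem_filter, Finset.mem_univ, true_and]
      have hinv : b⁻¹ * w * b = w := by
        rw [mul_comm b⁻¹ w, mul_assoc, inv_mul_cancel₀ hb0, mul_one]
      calc b^2 = (y + b⁻¹ * w) * b := by rw [hyz, pow_two]
        _ = y * b + w := by rw [add_mul, hinv]
  have hcB : Fintype.card ↥B₁ = q ^ β₁ := by
    rw [card_eq_pow_finrank (K := K), hcard, hB₁]
  have hScard : S.card ≤ 2 * q ^ (2 * β₁) := by
    calc S.card ≤ _ := Finset.card_le_card hcover
      _ ≤ ∑ p : ↥B₁ × ↥B₁,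
          (Finset.univ.filter fun b : L => b^2 = (p.1 : L)*b + (p.2 : L)).card :=
        Finset.card_biUnion_le
      _ ≤ ∑ _p : ↥B₁ × ↥B₁, 2 := Finset.sum_le_sum fun p _ => root_bound L _ _
      _ = (q ^ β₁ * q ^ β₁) * 2 := by
        simp [Finset.sum_const, Fintype.card_prod, hcB, mul_comm]
      _ = 2 * q ^ (2 * β₁) := by rw [two_mul β₁, pow_add]; ring
  have hcL : (Nat.card L : ℝ) = (q : ℝ) ^ m := by
    rw [Nat.card_eq_fintype_card, card_eq_pow_finrank (K := K), hcard, hm]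
    push_cast; ring
  rw [hcardS, hcL]
  have hqpos : (0:ℝ) < (q:ℝ)^m := by
    have : (0:ℝ) < (q:ℝ) := by exact_mod_cast Nat.lt_of_lt_of_le (by norm_num) hq
    positivity
  gcongr
  calc (S.card : ℝ) ≤ ((2 * q ^ (2 * β₁) : ℕ) : ℝ) := by exact_mod_cast hScard
    _ = 2 * (q:ℝ) ^ (2 * β₁) := by push_cast; ring
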